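/- Consider a ζ-approximate linear MDP: for each step h there exist signed measures μ_h on the finite state set S and a vector θ_h ∈ ℝ^d with ‖φ(x,a)‖ ≤ 1, such that the total variation distance ‖P_h(·|x,a) − ⟨φ(x,a), μ_h(·)⟩‖_TV ≤ ζ and |r_h(x,a) − ⟨φ(x,a), θ_h⟩| ≤ ζ for all (x,a). Then for any policy π, setting w_h^π = θ_h + Σ_{x'} V_{h+1}^π(x') μ_h(x'), for all (x,a,h): |Q_h^π(x,a) − ⟨φ(x,a), w_h^π⟩| ≤ 2Hζ. -/
import Mathlib


open Matrix Finset

/-- In a ζ-approximate linear MDP, the action-value function of any policy is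
2Hζ-close to the linear function with weights `w_h^π = θ_h + ∑_{x'} V_{h+1}^π(x') μ_h(x')`. -/
theorem stmt_18 (S A : Type) [Fintype S] [Fintype A] (d H : ℕ)
    (ζ : ℝ) (hζ0 : 0 ≤ ζ) (hζ1 : ζ ≤ 1)
    (φ : S → A → Fin d → ℝ)
    (hφ : ∀ x a, Real.sqrt (φ x a ⬝ᵥ φ x a) ≤ 1)
    (μ : ℕ → S → Fin d → ℝ) (θ : ℕ → Fin d → ℝ)
    (P : ℕ → S → A → S → ℝ) (r : ℕ → S → A → ℝ)
    (hPpos : ∀ h x a x', 0 ≤ P h x a x')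
    (hPsum : ∀ h x a, ∑ x' : S, P h x a x' = 1)
    (hPTV : ∀ h x a, ∑ x' : S, |P h x a x' - φ x a ⬝ᵥ μ h x'| ≤ ζ)
    (hrζ : ∀ h x a, |r h x a - φ x a ⬝ᵥ θ h| ≤ ζ)
    (hr01 : ∀ h x a, r h x a ∈ Set.Icc (0 : ℝ) 1)
    (π : S → ℕ → A)
    (Q : ℕ → S → A → ℝ) (V : ℕ → S → ℝ)
    (hV : ∀ h x, V h x = Q h x (π x h))
    (hQend : ∀ x a, Q (H + 1) x a = 0)
    (hBellman : ∀ h ∈ Finset.Icc 1 H, ∀ x a,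
      Q h x a = r h x a + ∑ x' : S, P h x a x' * V (h + 1) x')
    (w : ℕ → Fin d → ℝ)
    (hw : ∀ h, w h = θ h + ∑ x' : S, V (h + 1) x' • μ h x') :
    ∀ h ∈ Finset.Icc 1 H, ∀ x a, |Q h x a - φ x a ⬝ᵥ w h| ≤ 2 * H * ζ := by
  -- V bounds by backward induction
  have key : ∀ m : ℕ, m ≤ H → ∀ x, 0 ≤ V (H + 1 - m) x ∧ V (H + 1 - m) x ≤ (m : ℝ) := by
    intro m
    induction m with
    | zero =>
      intro _ x
      simp [hV, hQend]
    | succ m ih =>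
      intro hm x
      have hmH : m ≤ H := by omega
      have hh : H + 1 - (m + 1) ∈ Finset.Icc 1 H := by
        simp only [Finset.mem_Icc]; omega
      have hstep : H + 1 - (m + 1) + 1 = H + 1 - m := by omega
      rw [hV, hBellman _ hh, hstep]
      have hVb := fun x' => ih hmH x'
      have hr := hr01 (H + 1 - (m + 1)) x (π x (H + 1 - (m + 1)))
      constructor
      · have : (0:ℝ) ≤ ∑ x' : S, P (H + 1 - (m + 1)) x (π x (H + 1 - (m + 1))) x' * V (H + 1 - m) x' := by
          apply Finset.sum_nonneg
          intro x' _
          exact mul_nonneg (hPpos _ _ _ _) (hVb x').1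
        linarith [hr.1]
      · have hsum : ∑ x' : S, P (H + 1 - (m + 1)) x (π x (H + 1 - (m + 1))) x' * V (H + 1 - m) x'
            ≤ ∑ x' : S, P (H + 1 - (m + 1)) x (π x (H + 1 - (m + 1))) x' * (m : ℝ) := by
          apply Finset.sum_le_sum
          intro x' _
          exact mul_le_mul_of_nonneg_left (hVb x').2 (hPpos _ _ _ _)
        rw [← Finset.sum_mul, hPsum, one_mul] at hsum
        have hc : ((m + 1 : ℕ) : ℝ) = (m : ℝ) + 1 := by push_cast; ring
        rw [hc]
        linarith [hr.2]
  intro h hh x a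
  obtain ⟨h1, hH⟩ := Finset.mem_Icc.mp hh
  have hVb : ∀ x', 0 ≤ V (h + 1) x' ∧ V (h + 1) x' ≤ (H : ℝ) := by
    intro x'
    have heq : h + 1 = H + 1 - (H - h) := by omega
    have := key (H - h) (by omega) x'
    rw [← heq] at this
    refine ⟨this.1, this.2.trans ?_⟩
    exact_mod_cast Nat.cast_le.mpr (Nat.sub_le H h)
  -- expand the dot product
  have hdot : φ x a ⬝ᵥ w h = φ x a ⬝ᵥ θ h + ∑ x' : S, V (h + 1) x' * (φ x a ⬝ᵥ μ h x') := by
    rw [hw, dotProduct_add]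
    congr 1
    simp only [dotProduct, Finset.sum_apply, Pi.smul_apply, smul_eq_mul, Finset.mul_sum]
    rw [Finset.sum_comm]
    exact Finset.sum_congr rfl fun x' _ => Finset.sum_congr rfl fun i _ => by ring
  have hQ : Q h x a = r h x a + ∑ x' : S, P h x a x' * V (h + 1) x' := hBellman h hh x a
  have hdiff : Q h x a - φ x a ⬝ᵥ w h
      = (r h x a - φ x a ⬝ᵥ θ h)
        + ∑ x' : S, (P h x a x' - φ x a ⬝ᵥ μ h x') * V (h + 1) x' := by
    rw [hQ, hdot]
    have heq : ∑ x' : S, (P h x a x' - φ x a ⬝ᵥ μ h x') * V (h + 1) x'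
        = ∑ x' : S, P h x a x' * V (h + 1) x'
          - ∑ x' : S, V (h + 1) x' * (φ x a ⬝ᵥ μ h x') := by
      rw [← Finset.sum_sub_distrib]
      exact Finset.sum_congr rfl fun x' _ => by ring
    rw [heq]; ring
  have hsum2 : |∑ x' : S, (P h x a x' - φ x a ⬝ᵥ μ h x') * V (h + 1) x'| ≤ H * ζ := by
    calc |∑ x' : S, (P h x a x' - φ x a ⬝ᵥ μ h x') * V (h + 1) x'|
        ≤ ∑ x' : S, |(P h x a x' - φ x a ⬝ᵥ μ h x') * V (h + 1) x'| :=
          Finset.abs_sum_le_sum_abs _ _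
      _ ≤ ∑ x' : S, |P h x a x' - φ x a ⬝ᵥ μ h x'| * (H : ℝ) := by
          apply Finset.sum_le_sum
          intro x' _
          rw [abs_mul, abs_of_nonneg (hVb x').1]
          exact mul_le_mul_of_nonneg_left (hVb x').2 (abs_nonneg _)
      _ = (∑ x' : S, |P h x a x' - φ x a ⬝ᵥ μ h x'|) * H := by rw [Finset.sum_mul]
      _ ≤ ζ * H := mul_le_mul_of_nonneg_right (hPTV h x a) (Nat.cast_nonneg H)
      _ = H * ζ := mul_comm _ _
  have h1' : (1:ℝ) ≤ H := by exact_mod_cast Nat.one_le_iff_ne_zero.mpr (by omega)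
  have : |Q h x a - φ x a ⬝ᵥ w h| ≤ ζ + H * ζ := by
    rw [hdiff]
    exact (abs_add_le _ _).trans (add_le_add (hrζ h x a) hsum2)
  have : ζ + H * ζ ≤ 2 * H * ζ := by nlinarith
  linarith
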